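/- Let G be a graph and i, j distinct nodes such that neither N_i(G)\{j} ⊆ N_j(G)\{i} nor N_j(G)\{i} ⊆ N_i(G)\{j}. Let L = {l ∉ {i,j} : g_{il} = 0 and g_{jl} = 1} be the set of j's neighbors that are not i's neighbors, and let Ĝ = G + Σ_{l∈L} E_{il} − Σ_{l∈L} E_{jl} be the graph obtained by reallocating all neighbors in L from j to i. Then L is nonempty, Ĝ is a valid simple graph with the same number of edges as G, and 1'G^k 1 < 1'Ĝ^k 1 for every integer k ≥ 2. -/

import Mathlib

open Matrix BigOperators

/-- The symmetric elementary matrix with 1 in entries (a,b) and (b,a), 0 elsewhere. -/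
def E {n : ℕ} (a b : Fin n) : Matrix (Fin n) (Fin n) ℝ :=
  fun p q => if (p = a ∧ q = b) ∨ (p = b ∧ q = a) then 1 else 0

/-- The neighborhood of node `i` in the (0/1-valued) network `G`. -/
def Nbr {n : ℕ} (G : Matrix (Fin n) (Fin n) ℝ) (i : Fin n) : Set (Fin n) :=
  {l | G i l = 1}

set_option linter.unnecessarySeqFocus false

lemma sumE_apply {n : ℕ} (c : Fin n) (L : Finset (Fin n)) (hc : c ∉ L) (u v : Fin n) :
    (∑ l ∈ L, E c l) u v
      = (if u = c ∧ v ∈ L then (1:ℝ) else 0) + (if v = c ∧ u ∈ L then 1 else 0) := by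
  classical
  rw [Matrix.sum_apply]
  have h : ∀ l ∈ L, (E c l u v : ℝ)
      = (if u = c ∧ v = l then (1:ℝ) else 0) + (if u = l ∧ v = c then 1 else 0) := by
    intro l hl
    have hlc : c ≠ l := fun h => hc (by rw [h]; exact hl)
    unfold E
    by_cases h1 : u = c ∧ v = l <;> by_cases h2 : u = l ∧ v = c <;> simp [h1, h2, hlc]
  rw [Finset.sum_congr rfl h, Finset.sum_add_distrib]
  congr 1
  · by_cases hu : u = c
    · subst hu
      simp only [eq_self_iff_true, true_and]
      rw [Finset.sum_ite_eq L v (fun _ => (1:ℝ))]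
    · simp [hu]
  · by_cases hv : v = c
    · subst hv
      simp only [eq_self_iff_true, and_true, true_and]
      rw [Finset.sum_ite_eq L u (fun _ => (1:ℝ))]
    · simp [hv]



/-- row sums of A^k, i.e. number of walks of length k from v. -/
def gsum {n : ℕ} (A : Matrix (Fin n) (Fin n) ℝ) (k : ℕ) (v : Fin n) : ℝ := ∑ u, (A ^ k) v u

lemma gsum_zero {n : ℕ} (A : Matrix (Fin n) (Fin n) ℝ) (v : Fin n) : gsum A 0 v = 1 := by
  simp [gsum, Matrix.one_apply]

lemma gsum_succ {n : ℕ} (A : Matrix (Fin n) (Fin n) ℝ) (k : ℕ) (v : Fin n) :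
    gsum A (k+1) v = ∑ u, A v u * gsum A k u := by
  unfold gsum
  have h : ∀ u, (A ^ (k+1)) v u = ∑ x, A v x * (A ^ k) x u := by
    intro u; rw [pow_succ', Matrix.mul_apply]
  simp only [h]
  rw [Finset.sum_comm]
  exact Finset.sum_congr rfl (fun x _ => by rw [Finset.mul_sum])

lemma gsum_nonneg {n : ℕ} {A : Matrix (Fin n) (Fin n) ℝ}
    (hnn : ∀ u v, 0 ≤ A u v) (k : ℕ) (v : Fin n) : 0 ≤ gsum A k v := by
  induction k generalizing v with
  | zero => rw [gsum_zero]; norm_num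
  | succ k ih =>
      rw [gsum_succ]
      exact Finset.sum_nonneg (fun u _ => mul_nonneg (hnn v u) (ih u))

lemma gsum_mono {n : ℕ} {A : Matrix (Fin n) (Fin n) ℝ}
    (hsym : ∀ u v, A u v = A v u) (h01 : ∀ u v, A u v = 0 ∨ A u v = 1)
    (k : ℕ) (v : Fin n) (hv : ∃ u, A v u = 1) :
    gsum A k v ≤ gsum A (k+1) v := by
  have hnn : ∀ u v, 0 ≤ A u v := by
    intro u v; rcases h01 u v with h | h <;> rw [h] <;> norm_num
  induction k generalizing v with
  | zero =>
      obtain ⟨u, hu⟩ := hv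
      rw [gsum_zero, gsum_succ]
      calc (1:ℝ) = A v u * gsum A 0 u := by rw [gsum_zero, hu]; ring
        _ ≤ ∑ x, A v x * gsum A 0 x := by
            apply Finset.single_le_sum (f := fun x => A v x * gsum A 0 x)
              (fun x _ => mul_nonneg (hnn v x) (gsum_nonneg hnn 0 x)) (Finset.mem_univ u)
  | succ k ih =>
      rw [gsum_succ, gsum_succ]
      apply Finset.sum_le_sum
      intro u _
      rcases h01 v u with h | h
      · rw [h]; ring_nf; exact le_refl _
      · rw [h, one_mul, one_mul]
        exact ih u ⟨v, by rw [hsym]; exact h⟩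

lemma gsum_one_le {n : ℕ} {A : Matrix (Fin n) (Fin n) ℝ}
    (hsym : ∀ u v, A u v = A v u) (h01 : ∀ u v, A u v = 0 ∨ A u v = 1)
    (k : ℕ) (v : Fin n) (hv : ∃ u, A v u = 1) : 1 ≤ gsum A k v := by
  induction k with
  | zero => rw [gsum_zero]
  | succ k ih => exact le_trans ih (gsum_mono hsym h01 k v hv)

lemma split_sum {n : ℕ} (i j : Fin n) (hij : i ≠ j) (f : Fin n → ℝ) :
    (∑ u, f u) = (∑ u ∈ (Finset.univ.erase j).erase i, f u) + f i + f j := by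
  rw [Finset.sum_erase_add _ _ (by simp [Finset.mem_erase, hij]),
      Finset.sum_erase_add _ _ (by simp)]

theorem key {n : ℕ} (G H : Matrix (Fin n) (Fin n) ℝ)
    (i j a b : Fin n) (L D : Finset (Fin n))
    (hij : i ≠ j)
    (hGs : ∀ u v, G u v = G v u)
    (h01 : ∀ u v, G u v = 0 ∨ G u v = 1)
    (hGii : G i i = 0) (hGjj : G j j = 0)
    (hHs : ∀ u v, H u v = H v u)
    (hHii : H i i = 0) (hHjj : H j j = 0) (hHij : H i j = G i j)
    (hHout : ∀ u v, u ≠ i → u ≠ j → v ≠ i → v ≠ j → H u v = G u v)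
    (hHiv : ∀ v, v ≠ i → v ≠ j → H i v = G i v + (if v ∈ L then 1 else 0))
    (hHjv : ∀ v, v ≠ i → v ≠ j → H j v = G j v - (if v ∈ L then 1 else 0))
    (hLmem : ∀ v, v ∈ L ↔ (v ≠ i ∧ v ≠ j ∧ G i v = 0 ∧ G j v = 1))
    (hDmem : ∀ v, v ∈ D ↔ (v ≠ i ∧ v ≠ j ∧ G i v = 1 ∧ G j v = 0))
    (ha : a ∈ D) (hb : b ∈ L) :
    ∀ k : ℕ, 2 ≤ k → (∑ u, ∑ v, (G ^ k) u v) < (∑ u, ∑ v, (H ^ k) u v) := by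
  classical
  have hGnn : ∀ u v, 0 ≤ G u v := by
    intro u v; rcases h01 u v with h | h <;> rw [h] <;> norm_num
  set Out : Finset (Fin n) := (Finset.univ.erase j).erase i with hOutDef
  have hOutmem : ∀ v, v ∈ Out ↔ (v ≠ i ∧ v ≠ j) := by
    intro v; simp [hOutDef, Finset.mem_erase, and_comm]
  have hbij : b ≠ i ∧ b ≠ j ∧ G i b = 0 ∧ G j b = 1 := (hLmem b).mp hb
  have haij : a ≠ i ∧ a ≠ j ∧ G i a = 1 ∧ G j a = 0 := (hDmem a).mp ha
  have hbOut : b ∈ Out := (hOutmem b).mpr ⟨hbij.1, hbij.2.1⟩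
  have haOut : a ∈ Out := (hOutmem a).mpr ⟨haij.1, haij.2.1⟩
  have hLOut : L ⊆ Out := fun v hv => (hOutmem v).mpr ⟨((hLmem v).mp hv).1, ((hLmem v).mp hv).2.1⟩
  have hDOut : D ⊆ Out := fun v hv => (hOutmem v).mpr ⟨((hDmem v).mp hv).1, ((hDmem v).mp hv).2.1⟩
  -- collapse of ite sums
  have hsumL : ∀ f : Fin n → ℝ, (∑ v ∈ Out, (if v ∈ L then f v else 0)) = ∑ v ∈ L, f v := by
    intro f
    rw [Finset.sum_ite_mem, Finset.inter_eq_right.mpr hLOut]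
  have hsumD : ∀ f : Fin n → ℝ, (∑ v ∈ Out, (if v ∈ D then f v else 0)) = ∑ v ∈ D, f v := by
    intro f
    rw [Finset.sum_ite_mem, Finset.inter_eq_right.mpr hDOut]
  -- case analysis for v outside
  have hcases : ∀ v ∈ Out,
      (G i v = 0 ∧ G j v = 0 ∧ v ∉ L ∧ v ∉ D) ∨
      (G i v = 1 ∧ G j v = 0 ∧ v ∉ L ∧ v ∈ D) ∨
      (G i v = 0 ∧ G j v = 1 ∧ v ∈ L ∧ v ∉ D) ∨
      (G i v = 1 ∧ G j v = 1 ∧ v ∉ L ∧ v ∉ D) := by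
    intro v hv
    obtain ⟨hvi, hvj⟩ := (hOutmem v).mp hv
    rcases h01 i v with h1 | h1 <;> rcases h01 j v with h2 | h2
    · exact Or.inl ⟨h1, h2, fun hL' => by simp [hLmem, h1, h2] at hL',
        fun hD' => by simp [hDmem, h1, h2] at hD'⟩
    · exact Or.inr (Or.inr (Or.inl ⟨h1, h2, (hLmem v).mpr ⟨hvi, hvj, h1, h2⟩,
        fun hD' => by simp [hDmem, h1, h2] at hD'⟩))
    · exact Or.inr (Or.inl ⟨h1, h2, fun hL' => by simp [hLmem, h1, h2] at hL',
        (hDmem v).mpr ⟨hvi, hvj, h1, h2⟩⟩)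
    · exact Or.inr (Or.inr (Or.inr ⟨h1, h2, fun hL' => by simp [hLmem, h1, h2] at hL',
        fun hD' => by simp [hDmem, h1, h2] at hD'⟩))
  have hmaxeq : ∀ v ∈ Out, G i v + (if v ∈ L then (1:ℝ) else 0)
      = G j v + (if v ∈ D then (1:ℝ) else 0) := by
    intro v hv
    rcases hcases v hv with ⟨h1, h2, h3, h4⟩ | ⟨h1, h2, h3, h4⟩ | ⟨h1, h2, h3, h4⟩ | ⟨h1, h2, h3, h4⟩ <;>
      simp [h1, h2, h3, h4]
  -- split recursions
  have hgi : ∀ k, gsum G (k+1) i = (∑ v ∈ Out, G i v * gsum G k v) + G i j * gsum G k j := by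
    intro k
    rw [gsum_succ, split_sum i j hij (fun v => G i v * gsum G k v), hGii]
    ring
  have hgj : ∀ k, gsum G (k+1) j = (∑ v ∈ Out, G j v * gsum G k v) + G i j * gsum G k i := by
    intro k
    rw [gsum_succ, split_sum i j hij (fun v => G j v * gsum G k v), hGjj, hGs j i]
    ring
  have hgv : ∀ k, ∀ v ∈ Out, gsum G (k+1) v =
      (∑ u ∈ Out, G v u * gsum G k u) + G i v * gsum G k i + G j v * gsum G k j := by
    intro k v hv
    rw [gsum_succ, split_sum i j hij (fun u => G v u * gsum G k u), hGs v i, hGs v j]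
  have hwi : ∀ k, gsum H (k+1) i =
      (∑ v ∈ Out, (G i v + (if v ∈ L then 1 else 0)) * gsum H k v) + G i j * gsum H k j := by
    intro k
    rw [gsum_succ, split_sum i j hij (fun v => H i v * gsum H k v), hHii, hHij]
    have : ∀ v ∈ Out, H i v * gsum H k v = (G i v + (if v ∈ L then 1 else 0)) * gsum H k v := by
      intro v hv
      obtain ⟨hvi, hvj⟩ := (hOutmem v).mp hv
      rw [hHiv v hvi hvj]
    rw [Finset.sum_congr rfl this]
    ring
  have hwj : ∀ k, gsum H (k+1) j =
      (∑ v ∈ Out, (G j v - (if v ∈ L then 1 else 0)) * gsum H k v) + G i j * gsum H k i := by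
    intro k
    rw [gsum_succ, split_sum i j hij (fun v => H j v * gsum H k v), hHjj, hHs j i, hHij]
    have : ∀ v ∈ Out, H j v * gsum H k v = (G j v - (if v ∈ L then 1 else 0)) * gsum H k v := by
      intro v hv
      obtain ⟨hvi, hvj⟩ := (hOutmem v).mp hv
      rw [hHjv v hvi hvj]
    rw [Finset.sum_congr rfl this]
    ring
  have hwv : ∀ k, ∀ v ∈ Out, gsum H (k+1) v =
      (∑ u ∈ Out, G v u * gsum H k u)
      + (G i v + (if v ∈ L then 1 else 0)) * gsum H k i
      + (G j v - (if v ∈ L then 1 else 0)) * gsum H k j := by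
    intro k v hv
    obtain ⟨hvi, hvj⟩ := (hOutmem v).mp hv
    rw [gsum_succ, split_sum i j hij (fun u => H v u * gsum H k u)]
    have e1 : ∀ u ∈ Out, H v u * gsum H k u = G v u * gsum H k u := by
      intro u hu
      obtain ⟨hui, huj⟩ := (hOutmem u).mp hu
      rw [hHout v u hvi hvj hui huj]
    rw [Finset.sum_congr rfl e1, hHs v i, hHs v j, hHiv v hvi hvj, hHjv v hvi hvj]
  -- sum splitting helpers
  have hadd : ∀ f : Fin n → ℝ, (∑ v ∈ Out, (G i v + (if v ∈ L then 1 else 0)) * f v)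
      = (∑ v ∈ Out, G i v * f v) + ∑ v ∈ L, f v := by
    intro f
    rw [← hsumL f, ← Finset.sum_add_distrib]
    exact Finset.sum_congr rfl (fun v hv => by split <;> ring)
  have hsub : ∀ f : Fin n → ℝ, (∑ v ∈ Out, (G j v - (if v ∈ L then 1 else 0)) * f v)
      = (∑ v ∈ Out, G j v * f v) - ∑ v ∈ L, f v := by
    intro f
    rw [← hsumL f, ← Finset.sum_sub_distrib]
    exact Finset.sum_congr rfl (fun v hv => by split <;> ring)
  have haddD : ∀ f : Fin n → ℝ, (∑ v ∈ Out, (G j v + (if v ∈ D then 1 else 0)) * f v)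
      = (∑ v ∈ Out, G j v * f v) + ∑ v ∈ D, f v := by
    intro f
    rw [← hsumD f, ← Finset.sum_add_distrib]
    exact Finset.sum_congr rfl (fun v hv => by split <;> ring)
  have hmaxsum : ∀ f : Fin n → ℝ, (∑ v ∈ Out, (G i v + (if v ∈ L then 1 else 0)) * f v)
      = (∑ v ∈ Out, G j v * f v) + ∑ v ∈ D, f v := by
    intro f
    rw [← haddD f]
    exact Finset.sum_congr rfl (fun v hv => by rw [hmaxeq v hv])
  have hminnn : ∀ v ∈ Out, 0 ≤ G j v - (if v ∈ L then (1:ℝ) else 0) := by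
    intro v hv
    rcases hcases v hv with ⟨h1, h2, h3, h4⟩ | ⟨h1, h2, h3, h4⟩ | ⟨h1, h2, h3, h4⟩ | ⟨h1, h2, h3, h4⟩ <;>
      simp [h1, h2, h3, h4]
  have hsubsub : ∀ f : Fin n → ℝ, (∑ v ∈ Out, (G j v - (if v ∈ L then 1 else 0)) * f v)
      - (∑ v ∈ Out, G i v * f v) = (∑ v ∈ Out, G j v * f v) - (∑ v ∈ L, f v) - (∑ v ∈ Out, G i v * f v) := by
    intro f; rw [hsub f]
  have hDLid : ∀ f : Fin n → ℝ, (∑ v ∈ Out, G j v * f v) - (∑ v ∈ L, f v) - (∑ v ∈ Out, G i v * f v)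
      = -(∑ v ∈ D, f v) := by
    intro f
    rw [← hsumL f, ← hsumD f, ← Finset.sum_sub_distrib, ← Finset.sum_sub_distrib, ← Finset.sum_neg_distrib]
    apply Finset.sum_congr rfl
    intro v hv
    rcases hcases v hv with ⟨h1, h2, h3, h4⟩ | ⟨h1, h2, h3, h4⟩ | ⟨h1, h2, h3, h4⟩ | ⟨h1, h2, h3, h4⟩ <;>
      simp [h1, h2, h3, h4]
  -- the main invariant
  have Inv : ∀ k,
      (∀ v ∈ Out, gsum G k v ≤ gsum H k v) ∧
      (gsum G k i + gsum G k j ≤ gsum H k i + gsum H k j) ∧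
      (gsum G k i ≤ gsum H k i) ∧
      (gsum G k j ≤ gsum H k i) ∧
      (0 ≤ (∑ v ∈ L, gsum G k v) + G i j * (gsum H k j - gsum G k j)) ∧
      (0 ≤ (∑ v ∈ D, gsum G k v) + G i j * (gsum H k j - gsum G k i)) := by
    intro k
    induction k with
    | zero =>
        refine ⟨fun v _ => by rw [gsum_zero, gsum_zero], by simp [gsum_zero], by simp [gsum_zero],
          by simp [gsum_zero], ?_, ?_⟩
        · simp only [gsum_zero, sub_self, mul_zero, add_zero]
          exact Finset.sum_nonneg (fun v _ => by norm_num)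
        · simp only [gsum_zero, sub_self, mul_zero, add_zero]
          exact Finset.sum_nonneg (fun v _ => by norm_num)
    | succ k IH =>
        obtain ⟨IH1, IH2, IH3, IH4, IH5, IH6⟩ := IH
        have sa : (∑ v ∈ Out, G i v * gsum G k v) ≤ ∑ v ∈ Out, G i v * gsum H k v :=
          Finset.sum_le_sum (fun u hu => mul_le_mul_of_nonneg_left (IH1 u hu) (hGnn i u))
        have sb : (∑ v ∈ Out, G j v * gsum G k v) ≤ ∑ v ∈ Out, G j v * gsum H k v :=
          Finset.sum_le_sum (fun u hu => mul_le_mul_of_nonneg_left (IH1 u hu) (hGnn j u))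
        have sL : (∑ v ∈ L, gsum G k v) ≤ ∑ v ∈ L, gsum H k v :=
          Finset.sum_le_sum (fun u hu => IH1 u (hLOut hu))
        have sD : (∑ v ∈ D, gsum G k v) ≤ ∑ v ∈ D, gsum H k v :=
          Finset.sum_le_sum (fun u hu => IH1 u (hDOut hu))
        have s1 : (0:ℝ) ≤ ∑ v ∈ Out, (G j v - (if v ∈ L then 1 else 0)) * (gsum H k v - gsum G k v) :=
          Finset.sum_nonneg (fun v hv => mul_nonneg (hminnn v hv) (by linarith [IH1 v hv]))
        have s2 : (∑ v ∈ Out, (G j v - (if v ∈ L then 1 else 0)) * (gsum H k v - gsum G k v))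
            = ((∑ v ∈ Out, G j v * gsum H k v) - ∑ v ∈ L, gsum H k v)
              - ((∑ v ∈ Out, G j v * gsum G k v) - ∑ v ∈ L, gsum G k v) := by
          rw [← hsub (gsum H k), ← hsub (gsum G k), ← Finset.sum_sub_distrib]
          exact Finset.sum_congr rfl (fun v hv => by ring)
        have mL : (∑ v ∈ L, gsum G k v) ≤ ∑ v ∈ L, gsum G (k+1) v :=
          Finset.sum_le_sum (fun v hv => gsum_mono hGs h01 k v
            ⟨j, by rw [hGs v j]; exact ((hLmem v).mp hv).2.2.2⟩)
        have mD : (∑ v ∈ D, gsum G k v) ≤ ∑ v ∈ D, gsum G (k+1) v :=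
          Finset.sum_le_sum (fun v hv => gsum_mono hGs h01 k v
            ⟨i, by rw [hGs v i]; exact ((hDmem v).mp hv).2.2.1⟩)
        refine ⟨?_, ?_, ?_, ?_, ?_, ?_⟩
        · -- O step
          intro v hv
          rw [hgv k v hv, hwv k v hv]
          have hsum : (∑ u ∈ Out, G v u * gsum G k u) ≤ ∑ u ∈ Out, G v u * gsum H k u :=
            Finset.sum_le_sum (fun u hu => mul_le_mul_of_nonneg_left (IH1 u hu) (hGnn v u))
          have hbr : G i v * gsum G k i + G j v * gsum G k j ≤
              (G i v + (if v ∈ L then 1 else 0)) * gsum H k i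
              + (G j v - (if v ∈ L then 1 else 0)) * gsum H k j := by
            rcases hcases v hv with ⟨h1, h2, h3, h4⟩ | ⟨h1, h2, h3, h4⟩ | ⟨h1, h2, h3, h4⟩ |
              ⟨h1, h2, h3, h4⟩ <;> simp [h1, h2, h3, h4] <;> linarith
          linarith
        · -- P step
          rw [hgi, hgj, hwi, hwj, hadd (gsum H k), hsub (gsum H k)]
          have hp : 0 ≤ G i j * ((gsum H k i + gsum H k j) - (gsum G k i + gsum G k j)) :=
            mul_nonneg (hGnn i j) (by linarith)
          linarith [sa, sb, hp]
        · -- Q step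
          rw [hgi, hwi, hadd (gsum H k)]
          linarith [sa, sL, IH5]
        · -- R step
          rw [hgj, hwi, hmaxsum (gsum H k)]
          linarith [sb, sD, IH6]
        · -- X step
          rcases h01 i j with hgij | hgij
          · simp only [hgij, zero_mul, add_zero]
            exact Finset.sum_nonneg (fun v _ => gsum_nonneg hGnn (k+1) v)
          · rw [hgij, one_mul, hwj, hgj, hgij, one_mul, hsub (gsum H k)]
            linarith [s1, s2, mL, IH3]
        · -- Y step
          rcases h01 i j with hgij | hgij
          · simp only [hgij, zero_mul, add_zero]
            exact Finset.sum_nonneg (fun v _ => gsum_nonneg hGnn (k+1) v)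
          · rw [hgij, one_mul, hwj, hgi, hgij, one_mul, hsub (gsum H k)]
            have s3 := hDLid (gsum G k)
            linarith [s1, s2, mD, IH4, s3]
  -- global helper versions
  have hOnn : ∀ k, ∀ v ∈ Out, 0 ≤ gsum H k v - gsum G k v := by
    intro k v hv; linarith [(Inv k).1 v hv]
  have s1g : ∀ k, (0:ℝ) ≤ ∑ v ∈ Out, (G j v - (if v ∈ L then 1 else 0)) * (gsum H k v - gsum G k v) :=
    fun k => Finset.sum_nonneg (fun v hv => mul_nonneg (hminnn v hv) (hOnn k v hv))
  have s2g : ∀ k, (∑ v ∈ Out, (G j v - (if v ∈ L then 1 else 0)) * (gsum H k v - gsum G k v))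
      = ((∑ v ∈ Out, G j v * gsum H k v) - ∑ v ∈ L, gsum H k v)
        - ((∑ v ∈ Out, G j v * gsum G k v) - ∑ v ∈ L, gsum G k v) := by
    intro k
    rw [← hsub (gsum H k), ← hsub (gsum G k), ← Finset.sum_sub_distrib]
    exact Finset.sum_congr rfl (fun v hv => by ring)
  have mDg : ∀ k, (∑ v ∈ D, gsum G k v) ≤ ∑ v ∈ D, gsum G (k+1) v := by
    intro k
    exact Finset.sum_le_sum (fun v hv => gsum_mono hGs h01 k v
      ⟨i, by rw [hGs v i]; exact ((hDmem v).mp hv).2.2.1⟩)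
  -- strictness chain
  have hObR : ∀ k, (gsum H k i - gsum G k j) ≤ gsum H (k+1) b - gsum G (k+1) b := by
    intro k
    rw [hwv k b hbOut, hgv k b hbOut]
    have h1 : G i b = 0 := hbij.2.2.1
    have h2 : G j b = 1 := hbij.2.2.2
    have hsum : (∑ u ∈ Out, G b u * gsum G k u) ≤ ∑ u ∈ Out, G b u * gsum H k u :=
      Finset.sum_le_sum (fun u hu => mul_le_mul_of_nonneg_left ((Inv k).1 u hu) (hGnn b u))
    simp only [h1, h2, if_pos hb]
    linarith [hsum]
  have hPb : ∀ k, gsum H k b - gsum G k b ≤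
      (gsum H (k+1) i + gsum H (k+1) j) - (gsum G (k+1) i + gsum G (k+1) j) := by
    intro k
    rw [hgi, hgj, hwi, hwj, hadd (gsum H k), hsub (gsum H k)]
    have t1 : G j b * (gsum H k b - gsum G k b) ≤
        ∑ v ∈ Out, G j v * (gsum H k v - gsum G k v) :=
      Finset.single_le_sum (fun v hv => mul_nonneg (hGnn j v) (hOnn k v hv)) hbOut
    have t2 : (∑ v ∈ Out, G j v * (gsum H k v - gsum G k v))
        = (∑ v ∈ Out, G j v * gsum H k v) - ∑ v ∈ Out, G j v * gsum G k v := by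
      rw [← Finset.sum_sub_distrib]
      exact Finset.sum_congr rfl (fun v hv => by ring)
    have t3 : (∑ v ∈ Out, G i v * gsum G k v) ≤ ∑ v ∈ Out, G i v * gsum H k v :=
      Finset.sum_le_sum (fun u hu => mul_le_mul_of_nonneg_left ((Inv k).1 u hu) (hGnn i u))
    have hp : 0 ≤ G i j * ((gsum H k i + gsum H k j) - (gsum G k i + gsum G k j)) :=
      mul_nonneg (hGnn i j) (by linarith [(Inv k).2.1])
    have h2 : G j b = 1 := hbij.2.2.2
    rw [h2, one_mul] at t1
    linarith [t1, t3, hp]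
  have hYR : ∀ k, (∑ v ∈ D, gsum G k v) + G i j * (gsum H k j - gsum G k i) ≤
      gsum H (k+1) i - gsum G (k+1) j := by
    intro k
    rw [hwi, hgj, hmaxsum (gsum H k)]
    have t : (∑ v ∈ Out, G j v * gsum G k v) ≤ ∑ v ∈ Out, G j v * gsum H k v :=
      Finset.sum_le_sum (fun u hu => mul_le_mul_of_nonneg_left ((Inv k).1 u hu) (hGnn j u))
    have tD : (∑ v ∈ D, gsum G k v) ≤ ∑ v ∈ D, gsum H k v :=
      Finset.sum_le_sum (fun u hu => (Inv k).1 u (hDOut hu))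
    have hp : 0 ≤ G i j * (gsum H k j - gsum H k j) := by simp
    linarith [t, tD]
  have hY1 : ∀ m, 1 ≤ gsum H m i - gsum G m j →
      1 ≤ (∑ v ∈ D, gsum G (m+1) v) + G i j * (gsum H (m+1) j - gsum G (m+1) i) := by
    intro m hR
    rcases h01 i j with hgij | hgij
    · rw [hgij, zero_mul, add_zero]
      have t1 : 1 ≤ gsum G (m+1) a :=
        gsum_one_le hGs h01 (m+1) a ⟨i, by rw [hGs a i]; exact haij.2.2.1⟩
      have t2 : gsum G (m+1) a ≤ ∑ v ∈ D, gsum G (m+1) v :=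
        Finset.single_le_sum (fun v _ => gsum_nonneg hGnn (m+1) v) ha
      linarith
    · rw [hgij, one_mul, hwj, hgi, hgij, one_mul, hsub (gsum H m)]
      have s3 := hDLid (gsum G m)
      linarith [s1g m, s2g m, mDg m, hR]
  have hRodd : ∀ t, 1 ≤ gsum H (2*t+1) i - gsum G (2*t+1) j := by
    intro t
    induction t with
    | zero =>
        have h := hYR 0
        have e : gsum H 0 j - gsum G 0 i = 0 := by rw [gsum_zero, gsum_zero]; ring
        rw [e, mul_zero, add_zero] at h
        have hD1 : 1 ≤ ∑ v ∈ D, gsum G 0 v := by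
          have t2 : gsum G 0 a ≤ ∑ v ∈ D, gsum G 0 v :=
            Finset.single_le_sum (fun v _ => gsum_nonneg hGnn 0 v) ha
          rw [gsum_zero] at t2
          exact t2
        have e2 : 2*0+1 = 0+1 := by norm_num
        rw [e2]
        linarith
    | succ t iht =>
        have h1 := hY1 (2*t+1) iht
        have h2 := hYR (2*t+1+1)
        have e : 2*(t+1)+1 = (2*t+1+1)+1 := by ring
        rw [e]
        linarith
  -- final assembly
  intro k hk
  show (∑ u, gsum G k u) < ∑ u, gsum H k u
  rw [split_sum i j hij (fun u => gsum G k u), split_sum i j hij (fun u => gsum H k u),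
    ← hOutDef]
  have hsubOut : (∑ v ∈ Out, (gsum H k v - gsum G k v))
      = (∑ v ∈ Out, gsum H k v) - ∑ v ∈ Out, gsum G k v := Finset.sum_sub_distrib _ _
  rcases Nat.even_or_odd k with he | ho
  · obtain ⟨t, ht⟩ : ∃ t, k = 2*t+1+1 := by
      rcases he with ⟨c, hc⟩; exact ⟨c-1, by omega⟩
    subst ht
    have h1 := hRodd t
    have h2 := hObR (2*t+1)
    have h3 : gsum H (2*t+1+1) b - gsum G (2*t+1+1) b ≤
        ∑ v ∈ Out, (gsum H (2*t+1+1) v - gsum G (2*t+1+1) v) :=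
      Finset.single_le_sum (fun v hv => hOnn _ v hv) hbOut
    have h4 := (Inv (2*t+1+1)).2.1
    linarith
  · obtain ⟨t, ht⟩ : ∃ t, k = 2*t+1+1+1 := by
      rcases ho with ⟨c, hc⟩; exact ⟨c-1, by omega⟩
    subst ht
    have h1 := hRodd t
    have h2 := hObR (2*t+1)
    have h3 := hPb (2*t+1+1)
    have h4 : (0:ℝ) ≤ ∑ v ∈ Out, (gsum H (2*t+1+1+1) v - gsum G (2*t+1+1+1) v) :=
      Finset.sum_nonneg (fun v hv => hOnn _ v hv)
    linarith


theorem stmt1 {n : ℕ} (G : Matrix (Fin n) (Fin n) ℝ) (hG : G.IsAdjMatrix)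
    (i j : Fin n) (hij : i ≠ j)
    (hnotnest₁ : ¬ (Nbr G i \ {j} ⊆ Nbr G j \ {i}))
    (hnotnest₂ : ¬ (Nbr G j \ {i} ⊆ Nbr G i \ {j}))
    (L : Finset (Fin n))
    (hL : ∀ l, l ∈ L ↔ (l ≠ i ∧ l ≠ j ∧ G i l = 0 ∧ G j l = 1)) :
    L.Nonempty ∧
    (G + ∑ l ∈ L, E i l - ∑ l ∈ L, E j l).IsAdjMatrix ∧
    (∑ u, ∑ v, (G + ∑ l ∈ L, E i l - ∑ l ∈ L, E j l) u v = ∑ u, ∑ v, G u v) ∧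
    ∀ k : ℕ, 2 ≤ k →
      ∑ u, ∑ v, (G ^ k) u v <
        ∑ u, ∑ v, ((G + ∑ l ∈ L, E i l - ∑ l ∈ L, E j l) ^ k) u v := by
  classical
  have hGs : ∀ u v, G u v = G v u := fun u v => (hG.symm.apply v u)
  have h01 : ∀ u v, G u v = 0 ∨ G u v = 1 := hG.zero_or_one
  have hdiag : ∀ u, G u u = 0 := hG.apply_diag
  -- b ∈ L
  obtain ⟨b, hbL⟩ : ∃ b, b ∈ L := by
    rw [Set.not_subset] at hnotnest₂
    obtain ⟨l, hl1, hl2⟩ := hnotnest₂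
    rw [Set.mem_diff, Set.mem_singleton_iff] at hl1
    have hGjl : G j l = 1 := hl1.1
    have hli : l ≠ i := hl1.2
    have hlj : l ≠ j := by
      intro h; rw [h] at hGjl; rw [hdiag j] at hGjl; norm_num at hGjl
    have hGil : G i l = 0 := by
      rcases h01 i l with h | h
      · exact h
      · exact absurd (⟨h, by simp [hlj]⟩ : l ∈ Nbr G i \ {j}) hl2
    exact ⟨l, (hL l).mpr ⟨hli, hlj, hGil, hGjl⟩⟩
  -- a with G i a = 1, G j a = 0
  obtain ⟨a, hai, haj, hGia, hGja⟩ :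
      ∃ a : Fin n, a ≠ i ∧ a ≠ j ∧ G i a = 1 ∧ G j a = 0 := by
    rw [Set.not_subset] at hnotnest₁
    obtain ⟨l, hl1, hl2⟩ := hnotnest₁
    rw [Set.mem_diff, Set.mem_singleton_iff] at hl1
    have hGil : G i l = 1 := hl1.1
    have hlj : l ≠ j := hl1.2
    have hli : l ≠ i := by
      intro h; rw [h] at hGil; rw [hdiag i] at hGil; norm_num at hGil
    have hGjl : G j l = 0 := by
      rcases h01 j l with h | h
      · exact h
      · exact absurd (⟨h, by simp [hli]⟩ : l ∈ Nbr G j \ {i}) hl2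
    exact ⟨l, hli, hlj, hGil, hGjl⟩
  have hiL : i ∉ L := fun h => ((hL i).mp h).1 rfl
  have hjL : j ∉ L := fun h => ((hL j).mp h).2.1 rfl
  set D : Finset (Fin n) :=
    Finset.univ.filter (fun v => v ≠ i ∧ v ≠ j ∧ G i v = 1 ∧ G j v = 0) with hDdef
  have hDmem : ∀ v, v ∈ D ↔ (v ≠ i ∧ v ≠ j ∧ G i v = 1 ∧ G j v = 0) := by
    intro v; simp [hDdef]
  have haD : a ∈ D := (hDmem a).mpr ⟨hai, haj, hGia, hGja⟩
  set H : Matrix (Fin n) (Fin n) ℝ := G + ∑ l ∈ L, E i l - ∑ l ∈ L, E j l with hHdef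
  have hHent : ∀ u v, H u v = G u v
      + ((if u = i ∧ v ∈ L then 1 else 0) + (if v = i ∧ u ∈ L then 1 else 0))
      - ((if u = j ∧ v ∈ L then 1 else 0) + (if v = j ∧ u ∈ L then 1 else 0)) := by
    intro u v
    rw [hHdef]
    simp only [Matrix.sub_apply, Matrix.add_apply]
    rw [sumE_apply i L hiL u v, sumE_apply j L hjL u v]
  have hHs : ∀ u v, H u v = H v u := by
    intro u v
    rw [hHent u v, hHent v u, hGs u v]
    ring
  have hHii : H i i = 0 := by
    rw [hHent i i]
    simp [hiL, hij, hdiag i]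
  have hHjj : H j j = 0 := by
    rw [hHent j j]
    simp [hjL, hij.symm, hdiag j]
  have hHij : H i j = G i j := by
    rw [hHent i j]
    simp [hiL, hjL, hij, hij.symm]
  have hHout : ∀ u v, u ≠ i → u ≠ j → v ≠ i → v ≠ j → H u v = G u v := by
    intro u v hui huj hvi hvj
    rw [hHent u v]
    simp [hui, huj, hvi, hvj]
  have hHiv : ∀ v, v ≠ i → v ≠ j → H i v = G i v + (if v ∈ L then 1 else 0) := by
    intro v hvi hvj
    rw [hHent i v]
    simp [hiL, hvi, hvj, hij]
  have hHjv : ∀ v, v ≠ i → v ≠ j → H j v = G j v - (if v ∈ L then 1 else 0) := by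
    intro v hvi hvj
    rw [hHent j v]
    simp [hjL, hvi, hvj, hij.symm]
  refine ⟨⟨b, hbL⟩, ?_, ?_, ?_⟩
  · -- IsAdjMatrix
    have main : ∀ v, v ≠ i → v ≠ j → (H i v = 0 ∨ H i v = 1) ∧ (H j v = 0 ∨ H j v = 1) := by
      intro v hvi hvj
      constructor
      · rw [hHiv v hvi hvj]
        by_cases hvL : v ∈ L
        · rw [((hL v).mp hvL).2.2.1]; simp [hvL]
        · simp only [hvL, ite_false, add_zero]
          exact h01 i v
      · rw [hHjv v hvi hvj]
        by_cases hvL : v ∈ L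
        · rw [((hL v).mp hvL).2.2.2]; simp [hvL]
        · simp only [hvL, ite_false, sub_zero]
          exact h01 j v
    have hH01 : ∀ u v, H u v = 0 ∨ H u v = 1 := by
      intro u v
      rcases eq_or_ne u i with hui | hui
      · rcases eq_or_ne v i with hvi | hvi
        · rw [hui, hvi, hHii]; left; rfl
        · rcases eq_or_ne v j with hvj | hvj
          · rw [hui, hvj, hHij]; exact h01 i j
          · rw [hui]; exact (main v hvi hvj).1
      · rcases eq_or_ne u j with huj | huj
        · rcases eq_or_ne v i with hvi | hvi
          · rw [huj, hvi, hHs j i, hHij]; exact h01 i j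
          · rcases eq_or_ne v j with hvj | hvj
            · rw [huj, hvj, hHjj]; left; rfl
            · rw [huj]; exact (main v hvi hvj).2
        · rcases eq_or_ne v i with hvi | hvi
          · rw [hvi, hHs u i]; exact (main u hui huj).1
          · rcases eq_or_ne v j with hvj | hvj
            · rw [hvj, hHs u j]; exact (main u hui huj).2
            · rw [hHout u v hui huj hvi hvj]; exact h01 u v
    refine { zero_or_one := fun u v => hH01 u v,
             symm := ?_,
             apply_diag := ?_ }
    · show Hᵀ = H
      exact Matrix.ext (fun u v => by rw [Matrix.transpose_apply, hHs v u])
    · intro u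
      rcases eq_or_ne u i with hui | hui
      · rw [hui, hHii]
      · rcases eq_or_ne u j with huj | huj
        · rw [huj, hHjj]
        · rw [hHout u u hui huj hui huj]; exact hdiag u
  · -- sum equality
    have e1 : ∀ c : Fin n, (∑ u, ∑ v, (if u = c ∧ v ∈ L then (1:ℝ) else 0)) = L.card := by
      intro c
      rw [Finset.sum_eq_single_of_mem c (Finset.mem_univ c)
        (fun x _ hx => Finset.sum_eq_zero (fun v _ => by simp [hx]))]
      simp [Finset.sum_boole, Finset.filter_mem_eq_inter]
    have e2 : ∀ c : Fin n, (∑ u, ∑ v, (if v = c ∧ u ∈ L then (1:ℝ) else 0)) = L.card := by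
      intro c
      rw [Finset.sum_comm]
      exact e1 c
    calc ∑ u, ∑ v, H u v
        = ∑ u, ∑ v, (G u v
            + ((if u = i ∧ v ∈ L then (1:ℝ) else 0) + (if v = i ∧ u ∈ L then 1 else 0))
            - ((if u = j ∧ v ∈ L then 1 else 0) + (if v = j ∧ u ∈ L then 1 else 0))) :=
          Finset.sum_congr rfl (fun u _ => Finset.sum_congr rfl (fun v _ => hHent u v))
      _ = ∑ u, ∑ v, G u v := by
          simp only [Finset.sum_add_distrib, Finset.sum_sub_distrib]
          rw [e1 i, e2 i, e1 j, e2 j]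
          ring
  · -- strict inequality
    exact fun k hk => key G H i j a b L D hij hGs h01 (hdiag i) (hdiag j)
      hHs hHii hHjj hHij hHout hHiv hHjv hL hDmem haD hbL k hk
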